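/- For every real β > 0 there exists a constant C(β) such that for all real x ≥ 1, ∑_{k ≤ x} (k/φ(k))^β ≤ C(β)·x. -/

import Mathlib

open Nat Finset

private lemma telescope_sum (n : ℕ) (hn : 1 ≤ n) :
    ∑ m ∈ Finset.Icc 2 n, ((1:ℝ)/((m:ℝ)-1) - 1/m) = 1 - 1/n := by
  induction n with
  | zero => omega
  | succ n ih =>
    rcases Nat.lt_or_ge n 1 with h | h
    · interval_cases n
      · simp
    · rw [Finset.sum_Icc_succ_top (by omega : 2 ≤ n+1), ih h]
      have hn0 : (n:ℝ) ≠ 0 := by positivity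
      have hn0' : (n:ℝ) + 1 ≠ 0 := by positivity
      push_cast
      simp only [add_sub_cancel_right]
      field_simp
      ring

/-- Lemma 5: for every `β > 0` there is `C(β)` with `∑_{k ≤ x} (k/φ(k))^β ≤ C(β) x`. -/
theorem sum_div_totient_pow_le (β : ℝ) (hβ : 0 < β) :
    ∃ C : ℝ, ∀ x : ℝ, 1 ≤ x →
      ∑ k ∈ Finset.Icc 1 ⌊x⌋₊, ((k : ℝ) / (Nat.totient k : ℝ)) ^ β ≤ C * x := by
  classical
  set A : ℝ := β * Real.exp β with hAdef
  have hA0 : 0 ≤ A := by positivity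
  refine ⟨Real.exp A, fun x hx => ?_⟩
  set n := ⌊x⌋₊ with hndef
  have hn1 : 1 ≤ n := Nat.le_floor (by exact_mod_cast hx)
  have hxn : (n : ℝ) ≤ x := Nat.floor_le (by linarith)
  set g : ℕ → ℝ := fun p => ((p:ℝ)/((p:ℝ)-1))^β - 1 with hgdef
  -- basic facts about g at primes
  have hbase : ∀ p : ℕ, p.Prime → 1 ≤ (p:ℝ)/((p:ℝ)-1) := by
    intro p hp
    have h2 : (2:ℝ) ≤ p := by exact_mod_cast hp.two_le
    rw [le_div_iff₀ (by linarith)]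
    linarith
  have hgnn : ∀ p : ℕ, p.Prime → 0 ≤ g p := by
    intro p hp
    have := Real.one_le_rpow (hbase p hp) hβ.le
    simp only [hgdef]
    linarith
  have hgle : ∀ p : ℕ, p.Prime → g p / p ≤ A * (1/((p:ℝ)-1) - 1/p) := by
    intro p hp
    have h2 : (2:ℝ) ≤ p := by exact_mod_cast hp.two_le
    have hq1 : (0:ℝ) < (p:ℝ) - 1 := by linarith
    set t : ℝ := 1/((p:ℝ)-1) with htdef
    have ht0 : 0 < t := by positivity
    have ht1 : t ≤ 1 := by rw [htdef, div_le_one hq1]; linarith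
    have hbt : (p:ℝ)/((p:ℝ)-1) = 1 + t := by
      rw [htdef]; field_simp; ring
    have hg1 : g p ≤ Real.exp (β*t) - 1 := by
      have hlog : Real.log (1+t) ≤ t := by
        have := Real.log_le_sub_one_of_pos (by linarith : (0:ℝ) < 1 + t)
        linarith
      have : ((p:ℝ)/((p:ℝ)-1))^β = Real.exp (Real.log (1+t) * β) := by
        rw [hbt, Real.rpow_def_of_pos (by linarith)]
      simp only [hgdef, this]
      have : Real.log (1+t) * β ≤ β * t := by
        rw [mul_comm]; exact mul_le_mul_of_nonneg_left hlog hβ.le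
      have := Real.exp_le_exp.mpr this
      linarith
    have hg2 : Real.exp (β*t) - 1 ≤ β*t * Real.exp (β*t) := by
      have h1 := Real.add_one_le_exp (-(β*t))
      have h2' : Real.exp (β*t) * Real.exp (-(β*t)) = 1 := by
        rw [← Real.exp_add]; simp
      nlinarith [Real.exp_pos (β*t)]
    have hg3 : β*t * Real.exp (β*t) ≤ A * t := by
      have hee : Real.exp (β*t) ≤ Real.exp β := by
        apply Real.exp_le_exp.mpr
        nlinarith
      calc β*t * Real.exp (β*t) ≤ β*t * Real.exp β :=
            mul_le_mul_of_nonneg_left hee (by positivity)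
        _ = A * t := by rw [hAdef]; ring
    have hgp : g p ≤ A * t := by linarith
    have hid : A * (1/((p:ℝ)-1) - 1/p) = A * t / p := by
      rw [htdef]; field_simp; try ring
    rw [hid]
    have hp0 : (0:ℝ) < p := by linarith
    gcongr
  set P : Finset ℕ := (Finset.range (n+1)).filter Nat.Prime with hPdef
  have hPprime : ∀ p ∈ P, p.Prime := fun p hp => (Finset.mem_filter.mp hp).2
  have hPsub : ∀ k ∈ Finset.Icc 1 n, k.primeFactors ⊆ P := by
    intro k hk p hp
    have hk' := Finset.mem_Icc.mp hk
    have hpp := Nat.prime_of_mem_primeFactors hp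
    have hdvd := Nat.dvd_of_mem_primeFactors hp
    have : p ≤ k := Nat.le_of_dvd (by omega) hdvd
    exact Finset.mem_filter.mpr ⟨Finset.mem_range.mpr (by omega), hpp⟩
  -- Step 1 : rewrite each summand
  have step1 : ∀ k ∈ Finset.Icc 1 n, ((k:ℝ)/(Nat.totient k : ℝ))^β
      = ∏ p ∈ k.primeFactors, (g p + 1) := by
    intro k hk
    have hk1 : 1 ≤ k := (Finset.mem_Icc.mp hk).1
    have hφ : (0:ℝ) < (Nat.totient k : ℝ) := by
      exact_mod_cast Nat.totient_pos.mpr (by omega)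
    have hppos : ∀ p ∈ k.primeFactors, (0:ℝ) < (p:ℝ) - 1 := by
      intro p hp
      have := (Nat.prime_of_mem_primeFactors hp).two_le
      have : (2:ℝ) ≤ p := by exact_mod_cast this
      linarith
    have hid : (k:ℝ)/(Nat.totient k : ℝ) = ∏ p ∈ k.primeFactors, ((p:ℝ)/((p:ℝ)-1)) := by
      have h := Nat.totient_mul_prod_primeFactors k
      have hcast := congrArg (Nat.cast : ℕ → ℝ) h
      push_cast at hcast
      have hrw : ∏ p ∈ k.primeFactors, (((p - 1 : ℕ)) : ℝ)
          = ∏ p ∈ k.primeFactors, ((p:ℝ) - 1) := by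
        refine Finset.prod_congr rfl fun p hp => ?_
        have := (Nat.prime_of_mem_primeFactors hp).two_le
        rw [Nat.cast_sub (by omega), Nat.cast_one]
      rw [hrw] at hcast
      have hP1 : (0:ℝ) < ∏ p ∈ k.primeFactors, (p:ℝ) := by
        apply Finset.prod_pos
        intro p hp
        have := hppos p hp; linarith
      have hP2 : (0:ℝ) < ∏ p ∈ k.primeFactors, ((p:ℝ) - 1) :=
        Finset.prod_pos hppos
      rw [Finset.prod_div_distrib, div_eq_div_iff hφ.ne' hP2.ne']
      linear_combination -hcast
    rw [hid, ← Real.finset_prod_rpow _ _ (fun p hp => by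
      have := hppos p hp
      positivity) β]
    refine Finset.prod_congr rfl fun p hp => ?_
    simp only [hgdef]
    ring
  -- Step 2 : expand products and swap summation
  have hiff : ∀ k ∈ Finset.Icc 1 n, ∀ t ∈ P.powerset,
      ((∏ p ∈ t, p) ∣ k ↔ t ⊆ k.primeFactors) := by
    intro k hk t ht
    have hk1 : 1 ≤ k := (Finset.mem_Icc.mp hk).1
    have htP := Finset.mem_powerset.mp ht
    constructor
    · intro hdvd p hp
      exact Nat.mem_primeFactors.mpr ⟨hPprime p (htP hp),
        dvd_trans (Finset.dvd_prod_of_mem _ hp) hdvd, by omega⟩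
    · intro hsub
      exact Finset.prod_primes_dvd k
        (fun p hp => (hPprime p (htP hp)).prime)
        (fun p hp => Nat.dvd_of_mem_primeFactors (hsub hp))
  have step2 : ∑ k ∈ Finset.Icc 1 n, ∏ p ∈ k.primeFactors, (g p + 1)
      = ∑ t ∈ P.powerset, (∏ p ∈ t, g p) * ((n / ∏ p ∈ t, p : ℕ) : ℝ) := by
    have hform : ∀ k ∈ Finset.Icc 1 n, ∏ p ∈ k.primeFactors, (g p + 1)
        = ∑ t ∈ P.powerset, if (∏ p ∈ t, p) ∣ k then ∏ p ∈ t, g p else 0 := by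
      intro k hk
      rw [Finset.prod_add]
      simp only [Finset.prod_const_one, mul_one]
      rw [← Finset.sum_filter]
      refine (Finset.sum_congr ?_ fun _ _ => rfl).symm
      ext t
      simp only [Finset.mem_filter, Finset.mem_powerset]
      constructor
      · rintro ⟨htP, hdvd⟩
        exact (hiff k hk t (Finset.mem_powerset.mpr htP)).mp hdvd
      · intro hsub
        have htP : t ⊆ P := hsub.trans (hPsub k hk)
        exact ⟨htP, (hiff k hk t (Finset.mem_powerset.mpr htP)).mpr hsub⟩
    calc ∑ k ∈ Finset.Icc 1 n, ∏ p ∈ k.primeFactors, (g p + 1)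
        = ∑ k ∈ Finset.Icc 1 n, ∑ t ∈ P.powerset,
            (if (∏ p ∈ t, p) ∣ k then ∏ p ∈ t, g p else 0) :=
          Finset.sum_congr rfl hform
      _ = ∑ t ∈ P.powerset, ∑ k ∈ Finset.Icc 1 n,
            (if (∏ p ∈ t, p) ∣ k then ∏ p ∈ t, g p else 0) := Finset.sum_comm
      _ = ∑ t ∈ P.powerset, (∏ p ∈ t, g p) * ((n / ∏ p ∈ t, p : ℕ) : ℝ) := by
          refine Finset.sum_congr rfl fun t ht => ?_
          rw [← Finset.sum_filter, Finset.sum_const, nsmul_eq_mul, mul_comm]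
          congr 1
          have : Finset.Icc 1 n = Finset.Ioc 0 n := rfl
          rw [this, Nat.Ioc_filter_dvd_card_eq_div]
  -- Step 3 : bound the counting terms and refold
  have step3 : ∑ t ∈ P.powerset, (∏ p ∈ t, g p) * ((n / ∏ p ∈ t, p : ℕ) : ℝ)
      ≤ x * ∏ p ∈ P, (g p / p + 1) := by
    have hfold : ∏ p ∈ P, (g p / p + 1) = ∑ t ∈ P.powerset, ∏ p ∈ t, (g p / p) := by
      rw [Finset.prod_add]
      simp only [Finset.prod_const_one, mul_one]
    rw [hfold, Finset.mul_sum]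
    refine Finset.sum_le_sum fun t ht => ?_
    have htP := Finset.mem_powerset.mp ht
    have hgt : 0 ≤ ∏ p ∈ t, g p :=
      Finset.prod_nonneg fun p hp => hgnn p (hPprime p (htP hp))
    have hm1 : 1 ≤ ∏ p ∈ t, p :=
      Finset.one_le_prod' fun p hp => (hPprime p (htP hp)).one_lt.le
    have hmpos : (0:ℝ) < ((∏ p ∈ t, p : ℕ) : ℝ) := by exact_mod_cast hm1
    have hcount : ((n / ∏ p ∈ t, p : ℕ) : ℝ) ≤ x / ((∏ p ∈ t, p : ℕ) : ℝ) :=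
      le_trans (Nat.cast_div_le) (by gcongr)
    calc (∏ p ∈ t, g p) * ((n / ∏ p ∈ t, p : ℕ) : ℝ)
        ≤ (∏ p ∈ t, g p) * (x / ((∏ p ∈ t, p : ℕ) : ℝ)) :=
          mul_le_mul_of_nonneg_left hcount hgt
      _ = x * ∏ p ∈ t, (g p / p) := by
          rw [Finset.prod_div_distrib, Nat.cast_prod]
          ring
  -- Step 4 : bound the product by exp A
  have step4 : ∏ p ∈ P, (g p / p + 1) ≤ Real.exp A := by
    have h1 : ∏ p ∈ P, (g p / p + 1) ≤ ∏ p ∈ P, Real.exp (g p / p) := by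
      apply Finset.prod_le_prod
      · intro p hp
        have hgp := hgnn p (hPprime p hp)
        have : (0:ℝ) < p := by
          exact_mod_cast (hPprime p hp).pos
        positivity
      · intro p hp
        have := Real.add_one_le_exp (g p / p)
        linarith
    rw [← Real.exp_sum] at h1
    refine h1.trans (Real.exp_le_exp.mpr ?_)
    have h2 : ∑ p ∈ P, g p / p ≤ ∑ p ∈ P, A * (1/((p:ℝ)-1) - 1/p) :=
      Finset.sum_le_sum fun p hp => hgle p (hPprime p hp)
    have hPsub2 : P ⊆ Finset.Icc 2 n := by
      intro p hp
      have := (hPprime p hp).two_le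
      have := Finset.mem_range.mp (Finset.mem_filter.mp hp).1
      exact Finset.mem_Icc.mpr ⟨by omega, by omega⟩
    have h3 : ∑ p ∈ P, A * (1/((p:ℝ)-1) - 1/p)
        ≤ ∑ m ∈ Finset.Icc 2 n, A * (1/((m:ℝ)-1) - 1/m) := by
      apply Finset.sum_le_sum_of_subset_of_nonneg hPsub2
      intro m hm _
      have hm' := Finset.mem_Icc.mp hm
      have h2m : (2:ℝ) ≤ m := by exact_mod_cast hm'.1
      have : 1/(m:ℝ) ≤ 1/((m:ℝ)-1) := by
        apply one_div_le_one_div_of_le <;> linarith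
      have : 0 ≤ 1/((m:ℝ)-1) - 1/m := by linarith
      positivity
    have h4 : ∑ m ∈ Finset.Icc 2 n, A * (1/((m:ℝ)-1) - 1/m) ≤ A := by
      rw [← Finset.mul_sum, telescope_sum n hn1]
      have : (0:ℝ) < (n:ℝ) := by exact_mod_cast hn1
      have h1n : 0 < 1/(n:ℝ) := by positivity
      nlinarith
    linarith
  calc ∑ k ∈ Finset.Icc 1 n, ((k:ℝ)/(Nat.totient k : ℝ))^β
      = ∑ k ∈ Finset.Icc 1 n, ∏ p ∈ k.primeFactors, (g p + 1) :=
        Finset.sum_congr rfl step1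
    _ = ∑ t ∈ P.powerset, (∏ p ∈ t, g p) * ((n / ∏ p ∈ t, p : ℕ) : ℝ) := step2
    _ ≤ x * ∏ p ∈ P, (g p / p + 1) := step3
    _ ≤ x * Real.exp A := by
        apply mul_le_mul_of_nonneg_left step4 (by linarith)
    _ = Real.exp A * x := mul_comm _ _
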